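/- Let (y*, z*) be an optimal solution of the barycenter LP for the discrete probability measures P₁,…,P_N. Then for every x_j ∈ S with z*_j > 0 and every i = 1,…,N, there is exactly one index k with x_{ik} ∈ supp(Pᵢ) and y*_{ijk} > 0. -/

import Mathlib

open MeasureTheory ENNReal

noncomputable section

/-- Euclidean space `ℝ^d`. -/
abbrev Euc (d : ℕ) := EuclideanSpace ℝ (Fin d)

/-- The (topological) support of a measure on `ℝ^d`: the set of points all of whose
neighborhoods have positive measure. -/
def msupp {d : ℕ} (μ : MeasureTheory.Measure (Euc d)) : Set (Euc d) :=
  {x | ∀ U ∈ nhds x, μ U ≠ 0}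

/-- A discrete probability measure: a probability measure with finite support. -/
def IsDiscreteProb {d : ℕ} (μ : MeasureTheory.Measure (Euc d)) : Prop :=
  IsProbabilityMeasure μ ∧ (msupp μ).Finite

/-- Finite second moment. -/
def FinSecondMoment {d : ℕ} (μ : MeasureTheory.Measure (Euc d)) : Prop :=
  ∫⁻ x, (‖x‖₊ : ℝ≥0∞) ^ 2 ∂μ < ⊤

/-- A coupling of `P` and `Q`: a measure on the product whose first marginal is `P`
and second marginal is `Q`. -/
def IsCoupling {d : ℕ} (γ : MeasureTheory.Measure (Euc d × Euc d))
    (P Q : MeasureTheory.Measure (Euc d)) : Prop :=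
  γ.map Prod.fst = P ∧ γ.map Prod.snd = Q

/-- Squared 2-Wasserstein distance: infimum of the quadratic transport cost over couplings. -/
def W2sq {d : ℕ} (P Q : MeasureTheory.Measure (Euc d)) : ℝ≥0∞ :=
  ⨅ γ ∈ {γ | IsCoupling γ P Q}, ∫⁻ p, (‖p.1 - p.2‖₊ : ℝ≥0∞) ^ 2 ∂γ

/-- A barycenter of `P 0, …, P (N-1)`: a probability measure with finite second moment
minimizing the sum of squared Wasserstein distances over all such measures. -/
def IsBarycenter {d N : ℕ} (P : Fin N → MeasureTheory.Measure (Euc d))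
    (Pbar : MeasureTheory.Measure (Euc d)) : Prop :=
  IsProbabilityMeasure Pbar ∧ FinSecondMoment Pbar ∧
    ∀ Q : MeasureTheory.Measure (Euc d), IsProbabilityMeasure Q → FinSecondMoment Q →
      ∑ i, W2sq Pbar (P i) ≤ ∑ i, W2sq Q (P i)

/-- A multi-coupling of `P 0, …, P (N-1)`: a probability measure on `(ℝ^d)^N` whose
`i`-th coordinate marginal is `P i`. -/
def IsMultiCoupling {d N : ℕ} (π : MeasureTheory.Measure (Fin N → Euc d))
    (P : Fin N → MeasureTheory.Measure (Euc d)) : Prop :=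
  IsProbabilityMeasure π ∧ ∀ i, π.map (fun x => x i) = P i

/-- The averaging map `(x₁, …, x_N) ↦ (x₁ + ⋯ + x_N)/N`. -/
def avgMap (d N : ℕ) : (Fin N → Euc d) → Euc d := fun x => (N : ℝ)⁻¹ • ∑ i, x i

/-- The set `S` of all centroids of support points, one from each measure. -/
def centroidSet {d N : ℕ} (P : Fin N → MeasureTheory.Measure (Euc d)) : Set (Euc d) :=
  {s | ∃ x : Fin N → Euc d, (∀ i, x i ∈ msupp (P i)) ∧ s = (N : ℝ)⁻¹ • ∑ i, x i}

/-- Feasibility for the barycenter LP: variables `y i j k` (transported mass from the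
candidate barycenter support point `j ∈ S` to the support point `k` of `Pᵢ`) and `z j`
(mass of the barycenter at `j`), subject to nonnegativity, the row constraints
`Σ_k y i j k = z j`, and the column constraints `Σ_j y i j k = Pᵢ({k})`. -/
def LPFeasible {d N : ℕ} (P : Fin N → MeasureTheory.Measure (Euc d))
    (SF : Finset (Euc d)) (suppF : Fin N → Finset (Euc d))
    (y : Fin N → Euc d → Euc d → ℝ) (z : Euc d → ℝ) : Prop :=
  (∀ i j k, 0 ≤ y i j k) ∧ (∀ j, 0 ≤ z j) ∧
  (∀ i, ∀ j ∈ SF, ∑ k ∈ suppF i, y i j k = z j) ∧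
  (∀ i, ∀ k ∈ suppF i, ∑ j ∈ SF, y i j k = (P i {k}).toReal)

/-- The cost `c(y) = Σ_{i,j,k} ‖x_j - x_{ik}‖² y_{ijk}` of the barycenter LP. -/
def LPcost {d N : ℕ} (SF : Finset (Euc d)) (suppF : Fin N → Finset (Euc d))
    (y : Fin N → Euc d → Euc d → ℝ) : ℝ :=
  ∑ i, ∑ j ∈ SF, ∑ k ∈ suppF i, ‖j - k‖ ^ 2 * y i j k

/-- An optimal solution of the barycenter LP: a feasible point attaining the minimum cost. -/
def LPOptimal {d N : ℕ} (P : Fin N → MeasureTheory.Measure (Euc d))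
    (SF : Finset (Euc d)) (suppF : Fin N → Finset (Euc d))
    (y : Fin N → Euc d → Euc d → ℝ) (z : Euc d → ℝ) : Prop :=
  LPFeasible P SF suppF y z ∧
    ∀ y' z', LPFeasible P SF suppF y' z' → LPcost SF suppF y ≤ LPcost SF suppF y'

lemma sum_piFinset_weight {N : ℕ} {α : Type*} [DecidableEq α]
    (t : Fin N → Finset α) (p : Fin N → α → ℝ)
    (hp : ∀ i, ∑ k ∈ t i, p i k = 1) (i0 : Fin N) (g : α → ℝ) :
    ∑ κ ∈ Fintype.piFinset t, (∏ i, p i (κ i)) * g (κ i0)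
      = ∑ k ∈ t i0, p i0 k * g k := by
  classical
  have key : ∀ κ : Fin N → α,
      (∏ i, Function.update p i0 (fun k => p i0 k * g k) i (κ i))
        = (∏ i, p i (κ i)) * g (κ i0) := by
    intro κ
    rw [← Finset.mul_prod_erase Finset.univ _ (Finset.mem_univ i0),
        ← Finset.mul_prod_erase Finset.univ (fun i => p i (κ i)) (Finset.mem_univ i0)]
    have h1 : ∀ i ∈ Finset.univ.erase i0,
        Function.update p i0 (fun k => p i0 k * g k) i (κ i) = p i (κ i) := by
      intro i hi
      rw [Function.update_of_ne (Finset.mem_erase.mp hi).1]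
    rw [Finset.prod_congr rfl h1, Function.update_self]
    ring
  calc ∑ κ ∈ Fintype.piFinset t, (∏ i, p i (κ i)) * g (κ i0)
      = ∑ κ ∈ Fintype.piFinset t,
          ∏ i, Function.update p i0 (fun k => p i0 k * g k) i (κ i) :=
        Finset.sum_congr rfl fun κ _ => (key κ).symm
    _ = ∏ i, ∑ k ∈ t i, Function.update p i0 (fun k => p i0 k * g k) i k :=
        (Finset.prod_univ_sum t _).symm
    _ = ∑ k ∈ t i0, p i0 k * g k := by
        rw [← Finset.mul_prod_erase Finset.univ _ (Finset.mem_univ i0), Function.update_self]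
        have h2 : ∀ i ∈ Finset.univ.erase i0,
            (∑ k ∈ t i, Function.update p i0 (fun k => p i0 k * g k) i k) = 1 := by
          intro i hi
          rw [Function.update_of_ne (Finset.mem_erase.mp hi).1]; exact hp i
        rw [Finset.prod_congr rfl h2, Finset.prod_const_one, mul_one]

lemma centroid_decomp {d N : ℕ} (hN : (N : ℝ) ≠ 0) (x : Fin N → Euc d) (a : Euc d) :
    ∑ i, ‖a - x i‖ ^ 2
      = ∑ i, ‖(N : ℝ)⁻¹ • ∑ i', x i' - x i‖ ^ 2
        + N * ‖a - (N : ℝ)⁻¹ • ∑ i', x i'‖ ^ 2 := by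
  set c : Euc d := (N : ℝ)⁻¹ • ∑ i', x i' with hc
  have hNc : (N : ℝ) • c = ∑ i', x i' := by
    rw [hc, smul_smul, mul_inv_cancel₀ hN, one_smul]
  have hsum0 : ∑ i, (c - x i) = (0 : Euc d) := by
    rw [Finset.sum_sub_distrib, Finset.sum_const, Finset.card_univ, Fintype.card_fin,
      ← Nat.cast_smul_eq_nsmul ℝ, hNc, sub_self]
  have hterm : ∀ i, ‖a - x i‖ ^ 2
      = ‖a - c‖ ^ 2 + 2 * (inner ℝ (a - c) (c - x i) : ℝ) + ‖c - x i‖ ^ 2 := by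
    intro i
    have h : a - x i = (a - c) + (c - x i) := by abel
    rw [h, norm_add_sq_real]
  calc ∑ i, ‖a - x i‖ ^ 2
      = ∑ i, (‖a - c‖ ^ 2 + 2 * (inner ℝ (a - c) (c - x i) : ℝ) + ‖c - x i‖ ^ 2) :=
        Finset.sum_congr rfl fun i _ => hterm i
    _ = (N : ℝ) * ‖a - c‖ ^ 2 + 2 * (inner ℝ (a - c) (∑ i, (c - x i)) : ℝ)
          + ∑ i, ‖c - x i‖ ^ 2 := by
        rw [Finset.sum_add_distrib, Finset.sum_add_distrib, Finset.sum_const,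
          Finset.card_univ, Fintype.card_fin, nsmul_eq_mul, ← Finset.mul_sum, inner_sum]
    _ = ∑ i, ‖c - x i‖ ^ 2 + N * ‖a - c‖ ^ 2 := by
        rw [hsum0, inner_zero_right]; ring

/-- for an optimal solution `(y*, z*)` of the barycenter LP, every `x_j ∈ S`
with `z*_j > 0` and every `i` admit exactly one support point `k` of `Pᵢ` with
`y*_{i j k} > 0` (no mass-splitting). -/
theorem stmt7 {d N : ℕ} (P : Fin N → MeasureTheory.Measure (Euc d))
    (hP : ∀ i, IsDiscreteProb (P i))
    (SF : Finset (Euc d)) (hSF : ↑SF = centroidSet P)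
    (suppF : Fin N → Finset (Euc d)) (hsuppF : ∀ i, ↑(suppF i) = msupp (P i))
    (y : Fin N → Euc d → Euc d → ℝ) (z : Euc d → ℝ)
    (hopt : LPOptimal P SF suppF y z)
    (j : Euc d) (hj : j ∈ SF) (hzj : 0 < z j) (i : Fin N) :
    ((suppF i).filter (fun k => 0 < y i j k)).card = 1 := by
  classical
  obtain ⟨⟨hynn, hznn, hrow, hcol⟩, hmin⟩ := hopt
  by_contra hcard
  have hN0 : 0 < N := i.pos
  have hNR : (N : ℝ) ≠ 0 := Nat.cast_ne_zero.mpr hN0.ne'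
  set Z := z j with hZ
  have hrowj : ∀ i', ∑ k ∈ suppF i', y i' j k = Z := fun i' => hrow i' j hj
  have hexpos : ∀ i', ∃ k ∈ suppF i', 0 < y i' j k := by
    intro i'
    have h : ∑ k ∈ suppF i', (0 : ℝ) < ∑ k ∈ suppF i', y i' j k := by
      rw [Finset.sum_const_zero, hrowj i']; exact hzj
    exact Finset.exists_lt_of_sum_lt h
  choose base hbase1 hbase2 using hexpos
  -- the filter has at least two elements
  have h1le : 1 ≤ ((suppF i).filter (fun k => 0 < y i j k)).card := by
    rw [Nat.one_le_iff_ne_zero, Ne, Finset.card_eq_zero, Finset.eq_empty_iff_forall_notMem]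
    intro h
    exact h (base i) (Finset.mem_filter.mpr ⟨hbase1 i, hbase2 i⟩)
  have h2le : 1 < ((suppF i).filter (fun k => 0 < y i j k)).card := by omega
  obtain ⟨k1, hk1m, k2, hk2m, hk12⟩ := Finset.one_lt_card.mp h2le
  obtain ⟨hk1s, hk1p⟩ := Finset.mem_filter.mp hk1m
  obtain ⟨hk2s, hk2p⟩ := Finset.mem_filter.mp hk2m
  -- conditional probabilities
  set p : Fin N → Euc d → ℝ := fun i' k => y i' j k / Z with hpdef
  have hpnn : ∀ i' k, 0 ≤ p i' k := fun i' k => div_nonneg (hynn i' j k) hzj.le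
  have hp1 : ∀ i', ∑ k ∈ suppF i', p i' k = 1 := by
    intro i'
    rw [hpdef, ← Finset.sum_div, hrowj i', div_self hzj.ne']
  set T := Fintype.piFinset suppF with hTdef
  set q : (Fin N → Euc d) → ℝ := fun κ => Z * ∏ i', p i' (κ i') with hqdef
  have hqnn : ∀ κ, 0 ≤ q κ :=
    fun κ => mul_nonneg hzj.le (Finset.prod_nonneg fun i' _ => hpnn i' (κ i'))
  set cm : (Fin N → Euc d) → Euc d := fun κ => (N : ℝ)⁻¹ • ∑ i', κ i' with hcmdef
  have hcmem : ∀ κ ∈ T, cm κ ∈ SF := by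
    intro κ hκ
    rw [← Finset.mem_coe, hSF]
    refine ⟨κ, fun i' => ?_, rfl⟩
    rw [← hsuppF i']
    exact Finset.mem_coe.mpr ((Fintype.mem_piFinset.mp (by rwa [hTdef] at hκ)) i')
  -- master weighted-sum identity
  have hw : ∀ (i' : Fin N) (g : Euc d → ℝ),
      ∑ κ ∈ T, q κ * g (κ i') = ∑ k ∈ suppF i', y i' j k * g k := by
    intro i' g
    have h1 := sum_piFinset_weight suppF p hp1 i' g
    calc ∑ κ ∈ T, q κ * g (κ i')
        = Z * ∑ κ ∈ T, (∏ i'', p i'' (κ i'')) * g (κ i') := by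
          rw [Finset.mul_sum]
          exact Finset.sum_congr rfl fun κ _ => by rw [hqdef]; ring
      _ = Z * ∑ k ∈ suppF i', p i' k * g k := by rw [h1]
      _ = ∑ k ∈ suppF i', y i' j k * g k := by
          rw [Finset.mul_sum]
          refine Finset.sum_congr rfl fun k _ => ?_
          rw [hpdef]
          field_simp
  -- fiber sum over k
  have hsplit : ∀ (i' : Fin N) (j' : Euc d) (F : (Fin N → Euc d) → ℝ),
      ∑ k ∈ suppF i', ∑ κ ∈ T.filter (fun κ => cm κ = j' ∧ κ i' = k), F κ
        = ∑ κ ∈ T.filter (fun κ => cm κ = j'), F κ := by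
    intro i' j' F
    have maps : ∀ κ ∈ T.filter (fun κ => cm κ = j'), κ i' ∈ suppF i' := by
      intro κ hκ
      have := (Finset.mem_filter.mp hκ).1
      exact (Fintype.mem_piFinset.mp this) i'
    rw [← Finset.sum_fiberwise_of_maps_to maps F]
    refine Finset.sum_congr rfl fun k _ => ?_
    rw [Finset.filter_filter]
  -- fiber sum over j' (and k): double fibering
  have hdouble : ∀ (i' : Fin N) (F : (Fin N → Euc d) → ℝ),
      ∑ j' ∈ SF, ∑ k ∈ suppF i', ∑ κ ∈ T.filter (fun κ => cm κ = j' ∧ κ i' = k), F κ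
        = ∑ κ ∈ T, F κ := by
    intro i' F
    rw [Finset.sum_congr rfl fun j' _ => hsplit i' j' F]
    exact Finset.sum_fiberwise_of_maps_to hcmem F
  -- column-type identity
  have hcolq : ∀ (i' : Fin N), ∀ k ∈ suppF i',
      ∑ κ ∈ T.filter (fun κ => κ i' = k), q κ = y i' j k := by
    intro i' k hk
    rw [Finset.sum_filter]
    have h1 : ∀ κ : Fin N → Euc d,
        (if κ i' = k then q κ else 0) = q κ * (if κ i' = k then 1 else 0) := by
      intro κ; split <;> simp
    rw [Finset.sum_congr rfl fun κ _ => h1 κ, hw i' (fun k' => if k' = k then 1 else 0)]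
    have h2 : ∀ k' : Euc d,
        y i' j k' * (if k' = k then 1 else 0) = if k' = k then y i' j k' else 0 := by
      intro k'; split <;> simp
    rw [Finset.sum_congr rfl fun k' _ => h2 k', Finset.sum_ite_eq' (suppF i') k, if_pos hk]
  -- the perturbed solution
  set y' : Fin N → Euc d → Euc d → ℝ := fun i' j' k =>
    y i' j' k - (if j' = j then y i' j k else 0)
      + ∑ κ ∈ T.filter (fun κ => cm κ = j' ∧ κ i' = k), q κ with hy'def
  set z' : Euc d → ℝ := fun j' =>
    z j' - (if j' = j then Z else 0) + ∑ κ ∈ T.filter (fun κ => cm κ = j'), q κ with hz'def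
  -- feasibility
  have hfeas' : (∀ i' j' k, 0 ≤ y' i' j' k) ∧ (∀ j', 0 ≤ z' j') ∧
      (∀ i', ∀ j' ∈ SF, ∑ k ∈ suppF i', y' i' j' k = z' j') ∧
      (∀ i', ∀ k ∈ suppF i', ∑ j' ∈ SF, y' i' j' k = (P i' {k}).toReal) := by
    refine ⟨?_, ?_, ?_, ?_⟩
    · intro i' j' k
      simp only [hy'def]
      by_cases hjj : j' = j
      · subst hjj
        rw [if_pos rfl, sub_self, zero_add]
        exact Finset.sum_nonneg fun κ _ => hqnn κ
      · rw [if_neg hjj, sub_zero]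
        exact add_nonneg (hynn i' j' k) (Finset.sum_nonneg fun κ _ => hqnn κ)
    · intro j'
      simp only [hz'def]
      by_cases hjj : j' = j
      · subst hjj
        rw [if_pos rfl, ← hZ, sub_self, zero_add]
        exact Finset.sum_nonneg fun κ _ => hqnn κ
      · rw [if_neg hjj, sub_zero]
        exact add_nonneg (hznn j') (Finset.sum_nonneg fun κ _ => hqnn κ)
    · intro i' j' hj'
      simp only [hy'def, hz'def]
      rw [Finset.sum_add_distrib, Finset.sum_sub_distrib, hrow i' j' hj', hsplit i' j' q]
      congr 2
      split
      · exact hrowj i'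
      · exact Finset.sum_const_zero
    · intro i' k hk
      simp only [hy'def]
      rw [Finset.sum_add_distrib, Finset.sum_sub_distrib, hcol i' k hk]
      have hmid : ∑ j' ∈ SF, (if j' = j then y i' j k else 0) = y i' j k := by
        rw [Finset.sum_ite_eq' SF j (fun _ => y i' j k), if_pos hj]
      have hthird : ∑ j' ∈ SF, ∑ κ ∈ T.filter (fun κ => cm κ = j' ∧ κ i' = k), q κ
          = y i' j k := by
        have maps : ∀ κ ∈ T.filter (fun κ => κ i' = k), cm κ ∈ SF := by
          intro κ hκ
          exact hcmem κ (Finset.mem_filter.mp hκ).1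
        have hfib := Finset.sum_fiberwise_of_maps_to maps q
        rw [← hcolq i' k hk, ← hfib]
        refine Finset.sum_congr rfl fun j' _ => ?_
        rw [Finset.filter_filter]
        congr 1
        apply Finset.filter_congr
        intro κ _
        simp [and_comm]
      rw [hmid, hthird]
      ring
  -- cost computation
  set A : ℝ := ∑ i', ∑ κ ∈ T, ‖cm κ - κ i'‖ ^ 2 * q κ with hAdef
  set B : ℝ := ∑ i', ∑ k ∈ suppF i', ‖j - k‖ ^ 2 * y i' j k with hBdef
  have hcost : (∑ i', ∑ j' ∈ SF, ∑ k ∈ suppF i', ‖j' - k‖ ^ 2 * y' i' j' k)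
      = (∑ i', ∑ j' ∈ SF, ∑ k ∈ suppF i', ‖j' - k‖ ^ 2 * y i' j' k) - B + A := by
    have hterm : ∀ (i' : Fin N), ∀ j' ∈ SF, ∀ k ∈ suppF i',
        ‖j' - k‖ ^ 2 * y' i' j' k
          = ‖j' - k‖ ^ 2 * y i' j' k - (if j' = j then ‖j' - k‖ ^ 2 * y i' j k else 0)
            + ∑ κ ∈ T.filter (fun κ => cm κ = j' ∧ κ i' = k), ‖cm κ - κ i'‖ ^ 2 * q κ := by
      intro i' j' _ k _
      rw [hy'def]
      simp only [mul_add, mul_sub, mul_ite, mul_zero, Finset.mul_sum]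
      congr 1
      refine Finset.sum_congr rfl fun κ hκ => ?_
      have hκ' := Finset.mem_filter.mp hκ
      rw [← hκ'.2.1, ← hκ'.2.2]
    calc (∑ i', ∑ j' ∈ SF, ∑ k ∈ suppF i', ‖j' - k‖ ^ 2 * y' i' j' k)
        = ∑ i', ∑ j' ∈ SF, ∑ k ∈ suppF i',
            (‖j' - k‖ ^ 2 * y i' j' k - (if j' = j then ‖j' - k‖ ^ 2 * y i' j k else 0)
              + ∑ κ ∈ T.filter (fun κ => cm κ = j' ∧ κ i' = k), ‖cm κ - κ i'‖ ^ 2 * q κ) :=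
          Finset.sum_congr rfl fun i' _ => Finset.sum_congr rfl fun j' hj' =>
            Finset.sum_congr rfl fun k hk => hterm i' j' hj' k hk
      _ = (∑ i', ∑ j' ∈ SF, ∑ k ∈ suppF i', ‖j' - k‖ ^ 2 * y i' j' k)
            - (∑ i', ∑ j' ∈ SF, ∑ k ∈ suppF i',
                (if j' = j then ‖j' - k‖ ^ 2 * y i' j k else 0))
            + ∑ i', ∑ j' ∈ SF, ∑ k ∈ suppF i',
                ∑ κ ∈ T.filter (fun κ => cm κ = j' ∧ κ i' = k), ‖cm κ - κ i'‖ ^ 2 * q κ := by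
          simp only [Finset.sum_add_distrib, Finset.sum_sub_distrib]
      _ = (∑ i', ∑ j' ∈ SF, ∑ k ∈ suppF i', ‖j' - k‖ ^ 2 * y i' j' k) - B + A := by
          congr 1
          · congr 1
            rw [hBdef]
            refine Finset.sum_congr rfl fun i' _ => ?_
            rw [Finset.sum_comm]
            refine Finset.sum_congr rfl fun k _ => ?_
            rw [Finset.sum_ite_eq' SF j (fun j' => ‖j' - k‖ ^ 2 * y i' j k), if_pos hj]
          · rw [hAdef]
            exact Finset.sum_congr rfl fun i' _ =>
              hdouble i' (fun κ => ‖cm κ - κ i'‖ ^ 2 * q κ)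
  -- B in terms of κ-sums
  have hB2 : B = ∑ i', ∑ κ ∈ T, q κ * ‖j - κ i'‖ ^ 2 := by
    rw [hBdef]
    refine Finset.sum_congr rfl fun i' _ => ?_
    rw [hw i' (fun k => ‖j - k‖ ^ 2)]
    exact Finset.sum_congr rfl fun k _ => (mul_comm _ _)
  -- A - B strictly negative
  have hAB : A - B = ∑ κ ∈ T, q κ * (-(N : ℝ) * ‖j - cm κ‖ ^ 2) := by
    rw [hB2, hAdef, Finset.sum_comm, Finset.sum_comm (s := Finset.univ) (t := T),
      ← Finset.sum_sub_distrib]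
    refine Finset.sum_congr rfl fun κ _ => ?_
    have hdec := centroid_decomp hNR κ j
    have h1 : ∑ i', ‖cm κ - κ i'‖ ^ 2 * q κ - ∑ i', q κ * ‖j - κ i'‖ ^ 2
        = q κ * ((∑ i', ‖cm κ - κ i'‖ ^ 2) - ∑ i', ‖j - κ i'‖ ^ 2) := by
      rw [← Finset.sum_mul, ← Finset.mul_sum]; ring
    rw [h1]
    have h2 : (∑ i', ‖cm κ - κ i'‖ ^ 2) - ∑ i', ‖j - κ i'‖ ^ 2
        = -(N : ℝ) * ‖j - cm κ‖ ^ 2 := by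
      rw [hcmdef]
      rw [hdec]
      ring
    rw [h2]
  -- find a strictly improving tuple
  set κa : Fin N → Euc d := Function.update base i k1 with hκadef
  set κb : Fin N → Euc d := Function.update base i k2 with hκbdef
  have hκaT : κa ∈ T := by
    rw [hTdef, Fintype.mem_piFinset]
    intro a
    rw [hκadef]
    by_cases ha : a = i
    · subst ha; rw [Function.update_self]; exact hk1s
    · rw [Function.update_of_ne ha]; exact hbase1 a
  have hκbT : κb ∈ T := by
    rw [hTdef, Fintype.mem_piFinset]
    intro a
    rw [hκbdef]
    by_cases ha : a = i
    · subst ha; rw [Function.update_self]; exact hk2s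
    · rw [Function.update_of_ne ha]; exact hbase1 a
  have hqa : 0 < q κa := by
    rw [hqdef]
    refine mul_pos hzj (Finset.prod_pos fun i' _ => ?_)
    rw [hκadef]
    by_cases ha : i' = i
    · subst ha; rw [Function.update_self, hpdef]; exact div_pos hk1p hzj
    · rw [Function.update_of_ne ha, hpdef]; exact div_pos (hbase2 i') hzj
  have hqb : 0 < q κb := by
    rw [hqdef]
    refine mul_pos hzj (Finset.prod_pos fun i' _ => ?_)
    rw [hκbdef]
    by_cases ha : i' = i
    · subst ha; rw [Function.update_self, hpdef]; exact div_pos hk2p hzj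
    · rw [Function.update_of_ne ha, hpdef]; exact div_pos (hbase2 i') hzj
  have hcmab : cm κa ≠ cm κb := by
    intro hcontra
    rw [hcmdef] at hcontra
    simp only [hκadef, hκbdef] at hcontra
    have hsa := Finset.sum_update_of_mem (Finset.mem_univ i) base k1
    have hsb := Finset.sum_update_of_mem (Finset.mem_univ i) base k2
    rw [hsa, hsb] at hcontra
    have := smul_right_injective (Euc d) (inv_ne_zero hNR) hcontra
    exact hk12 (by
      have := add_right_cancel this
      exact this)
  obtain ⟨κs, hκsT, hκsq, hκscm⟩ : ∃ κs ∈ T, 0 < q κs ∧ cm κs ≠ j := by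
    by_cases hca : cm κa = j
    · refine ⟨κb, hκbT, hqb, ?_⟩
      intro h
      exact hcmab (hca.trans h.symm)
    · exact ⟨κa, hκaT, hqa, hca⟩
  have hneg : A - B < 0 := by
    rw [hAB]
    have h0 : (0 : ℝ) = ∑ κ ∈ T, (0 : ℝ) := by rw [Finset.sum_const_zero]
    rw [h0]
    refine Finset.sum_lt_sum (fun κ _ => ?_) ⟨κs, hκsT, ?_⟩
    · have : 0 ≤ q κ * ((N : ℝ) * ‖j - cm κ‖ ^ 2) :=
        mul_nonneg (hqnn κ) (mul_nonneg (Nat.cast_nonneg N) (sq_nonneg _))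
      nlinarith
    · have hne : j - cm κs ≠ 0 := sub_ne_zero.mpr (fun h => hκscm h.symm)
      have h1 : 0 < ‖j - cm κs‖ ^ 2 := pow_pos (norm_pos_iff.mpr hne) 2
      have h2 : (0 : ℝ) < N := Nat.cast_pos.mpr hN0
      nlinarith [mul_pos (mul_pos hκsq h2) h1]
  have hfeas'' : LPFeasible P SF suppF y' z' := hfeas'
  have hle := hmin y' z' hfeas''
  unfold LPcost at hle
  rw [hcost] at hle
  linarith
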